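/- Let (Ω, μ) be a probability space and z : Ω → ℝ^n a measurable random vector with E‖z‖² < ∞. Let σ : ℝ → ℝ be Lipschitz continuous with constant C > 0, applied to vectors coordinatewise. Let W_a = Σ_{i=1}^{r} s_i u_i v_i^⊤ and W_b = Σ_{j=1}^{r'} t_j u'_j (v'_j)^⊤ be m×n real matrices, where (u_i)_{i=1}^{r} and (u'_j)_{j=1}^{r'} are orthonormal families in ℝ^m, s_i, t_j ∈ ℝ, and v_i, v'_j ∈ ℝ^n. Then E‖σ(W_a z) − σ(W_b z)‖ ≤ C ( Σ_{i=1}^{r} s_i² E((v_i·z)²) + Σ_{j=1}^{r'} t_j² E((v'_j·z)²) − 2 Σ_{i=1}^{r} Σ_{j=1}^{r'} s_i t_j (u_i·u'_j) E((v_i·z)(v'_j·z)) )^{1/2}. -/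

import Mathlib

open Matrix MeasureTheory

lemma cross_sum {m r r' : ℕ} (u : Fin r → Fin m → ℝ) (u' : Fin r' → Fin m → ℝ)
    (a : Fin r → ℝ) (b : Fin r' → ℝ) :
    ∑ k, (∑ i, a i * u i k) * (∑ j, b j * u' j k)
      = ∑ i, ∑ j, a i * b j * (u i ⬝ᵥ u' j) := by
  simp_rw [Finset.sum_mul_sum, dotProduct, Finset.mul_sum]
  rw [Finset.sum_comm]
  refine Finset.sum_congr rfl fun i _ => ?_
  rw [Finset.sum_comm]
  refine Finset.sum_congr rfl fun j _ => Finset.sum_congr rfl fun k _ => by ring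

lemma key_sum {m r r' : ℕ} (u : Fin r → Fin m → ℝ) (u' : Fin r' → Fin m → ℝ)
    (hu : ∀ i j, u i ⬝ᵥ u j = if i = j then 1 else 0)
    (hu' : ∀ i j, u' i ⬝ᵥ u' j = if i = j then 1 else 0)
    (a : Fin r → ℝ) (b : Fin r' → ℝ) :
    ∑ k, (∑ i, a i * u i k - ∑ j, b j * u' j k) ^ 2
      = ∑ i, (a i) ^ 2 + ∑ j, (b j) ^ 2
        - 2 * ∑ i, ∑ j, a i * b j * (u i ⬝ᵥ u' j) := by
  have h1 := cross_sum u u a a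
  have h2 := cross_sum u' u' b b
  have h3 := cross_sum u u' a b
  simp_rw [hu] at h1
  simp_rw [hu'] at h2
  simp only [mul_ite, mul_one, mul_zero, Finset.sum_ite_eq, Finset.mem_univ, if_true] at h1 h2
  calc ∑ k, (∑ i, a i * u i k - ∑ j, b j * u' j k) ^ 2
      = ∑ k, ((∑ i, a i * u i k) * (∑ i, a i * u i k)
          + (∑ j, b j * u' j k) * (∑ j, b j * u' j k)
          - 2 * ((∑ i, a i * u i k) * (∑ j, b j * u' j k))) := by
        refine Finset.sum_congr rfl fun k _ => by ring
    _ = ∑ i, (a i) ^ 2 + ∑ j, (b j) ^ 2 - 2 * ∑ i, ∑ j, a i * b j * (u i ⬝ᵥ u' j) := by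
        rw [Finset.sum_sub_distrib, Finset.sum_add_distrib, h1, h2, ← Finset.mul_sum, h3]
        simp [sq]

lemma integral_sqrt_le' {Ω : Type*} [MeasurableSpace Ω] (μ : Measure Ω) [IsProbabilityMeasure μ]
    (f : Ω → ℝ) (h0 : ∀ ω, 0 ≤ f ω) (hm : AEStronglyMeasurable f μ) (hf : Integrable f μ) :
    ∫ ω, Real.sqrt (f ω) ∂μ ≤ Real.sqrt (∫ ω, f ω ∂μ) := by
  have hpq : (2:ℝ).HolderConjugate 2 := Real.HolderConjugate.two_two
  have hsm : AEStronglyMeasurable (fun ω => Real.sqrt (f ω)) μ :=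
    Real.continuous_sqrt.comp_aestronglyMeasurable hm
  have hmem : MemLp (fun ω => Real.sqrt (f ω)) (ENNReal.ofReal 2) μ := by
    rw [show ENNReal.ofReal 2 = 2 by norm_num]
    rw [memLp_two_iff_integrable_sq hsm]
    exact hf.congr (ae_of_all _ fun ω => (Real.sq_sqrt (h0 ω)).symm)
  have hone : MemLp (fun _ : Ω => (1:ℝ)) (ENNReal.ofReal 2) μ := memLp_const 1
  have e1 : ∀ ω, Real.sqrt (f ω) ^ (2:ℝ) = f ω := fun ω => by
    rw [show (2:ℝ) = ((2:ℕ):ℝ) by norm_num, Real.rpow_natCast, Real.sq_sqrt (h0 ω)]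
  calc ∫ ω, Real.sqrt (f ω) ∂μ = ∫ ω, Real.sqrt (f ω) * 1 ∂μ := by simp
    _ ≤ (∫ ω, Real.sqrt (f ω) ^ (2:ℝ) ∂μ) ^ (1/(2:ℝ)) * (∫ _ω, (1:ℝ) ^ (2:ℝ) ∂μ) ^ (1/(2:ℝ)) :=
        integral_mul_le_Lp_mul_Lq_of_nonneg hpq
          (ae_of_all _ fun ω => Real.sqrt_nonneg _) (ae_of_all _ fun _ => zero_le_one) hmem hone
    _ = Real.sqrt (∫ ω, f ω ∂μ) := by
        simp_rw [e1, Real.one_rpow]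
        simp [Real.sqrt_eq_rpow]

theorem stmt4 {Ω : Type*} [MeasurableSpace Ω] (μ : Measure Ω) [IsProbabilityMeasure μ]
    {n m r r' : ℕ} (z : Ω → Fin n → ℝ) (hz : Measurable z)
    (hz2 : Integrable (fun ω => ∑ i, (z ω i) ^ 2) μ)
    (σ : ℝ → ℝ) (C : ℝ) (hC : 0 < C)
    (hσ : ∀ x y : ℝ, |σ x - σ y| ≤ C * |x - y|)
    (s : Fin r → ℝ) (t : Fin r' → ℝ)
    (u : Fin r → Fin m → ℝ) (u' : Fin r' → Fin m → ℝ)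
    (v : Fin r → Fin n → ℝ) (v' : Fin r' → Fin n → ℝ)
    (hu : ∀ i j, u i ⬝ᵥ u j = if i = j then 1 else 0)
    (hu' : ∀ i j, u' i ⬝ᵥ u' j = if i = j then 1 else 0)
    (Wa Wb : Matrix (Fin m) (Fin n) ℝ)
    (hWa : Wa = ∑ i, s i • vecMulVec (u i) (v i))
    (hWb : Wb = ∑ j, t j • vecMulVec (u' j) (v' j)) :
    ∫ ω, Real.sqrt (∑ k, (σ ((Wa *ᵥ z ω) k) - σ ((Wb *ᵥ z ω) k)) ^ 2) ∂μ
      ≤ C * Real.sqrt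
          ((∑ i, (s i) ^ 2 * ∫ ω, (v i ⬝ᵥ z ω) ^ 2 ∂μ)
            + (∑ j, (t j) ^ 2 * ∫ ω, (v' j ⬝ᵥ z ω) ^ 2 ∂μ)
            - 2 * ∑ i, ∑ j, s i * t j * (u i ⬝ᵥ u' j)
                * ∫ ω, (v i ⬝ᵥ z ω) * (v' j ⬝ᵥ z ω) ∂μ) := by
  -- the quadratic function F
  obtain ⟨F, hF⟩ : ∃ F : Ω → ℝ, F = fun ω =>
      (∑ i, (s i) ^ 2 * (v i ⬝ᵥ z ω) ^ 2) + (∑ j, (t j) ^ 2 * (v' j ⬝ᵥ z ω) ^ 2)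
        - 2 * ∑ i, ∑ j, s i * t j * (u i ⬝ᵥ u' j) * ((v i ⬝ᵥ z ω) * (v' j ⬝ᵥ z ω)) := ⟨_, rfl⟩
  -- mulVec formulas
  have hWax : ∀ x : Fin n → ℝ, ∀ k, (Wa *ᵥ x) k = ∑ i, (s i * (v i ⬝ᵥ x)) * u i k := by
    intro x k
    rw [hWa]
    simp only [Matrix.mulVec, dotProduct, Finset.sum_apply, Matrix.sum_apply,
      Matrix.smul_apply, vecMulVec_apply, smul_eq_mul, Finset.sum_mul]
    rw [Finset.sum_comm]
    refine Finset.sum_congr rfl fun i _ => ?_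
    simp only [Finset.mul_sum, Finset.sum_mul]
    exact Finset.sum_congr rfl fun l _ => by ring
  have hWbx : ∀ x : Fin n → ℝ, ∀ k, (Wb *ᵥ x) k = ∑ j, (t j * (v' j ⬝ᵥ x)) * u' j k := by
    intro x k
    rw [hWb]
    simp only [Matrix.mulVec, dotProduct, Finset.sum_apply, Matrix.sum_apply,
      Matrix.smul_apply, vecMulVec_apply, smul_eq_mul, Finset.sum_mul]
    rw [Finset.sum_comm]
    refine Finset.sum_congr rfl fun j _ => ?_
    simp only [Finset.mul_sum, Finset.sum_mul]
    exact Finset.sum_congr rfl fun l _ => by ring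
  -- pointwise value of the quadratic form
  have hG : ∀ ω, ∑ k, ((Wa *ᵥ z ω) k - (Wb *ᵥ z ω) k) ^ 2 = F ω := by
    intro ω
    simp_rw [hWax (z ω), hWbx (z ω)]
    rw [key_sum u u' hu hu']
    simp only [hF]
    congr 1
    · congr 1
      · exact Finset.sum_congr rfl fun i _ => by ring
      · exact Finset.sum_congr rfl fun j _ => by ring
    · congr 1
      exact Finset.sum_congr rfl fun i _ => Finset.sum_congr rfl fun j _ => by ring
  have hF0 : ∀ ω, 0 ≤ F ω := fun ω => by
    rw [← hG ω]; exact Finset.sum_nonneg fun k _ => sq_nonneg _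
  -- measurability of dot products
  have hdotm : ∀ p : Fin n → ℝ, Measurable (fun ω => p ⬝ᵥ z ω) := by
    intro p
    simp only [dotProduct]
    exact Finset.measurable_sum _ fun l _ =>
      measurable_const.mul ((measurable_pi_apply l).comp hz)
  -- integrability of products of dot products
  have hIvv : ∀ p q : Fin n → ℝ, Integrable (fun ω => (p ⬝ᵥ z ω) * (q ⬝ᵥ z ω)) μ := by
    intro p q
    refine Integrable.mono' (hz2.const_mul (((∑ l, (p l) ^ 2) + ∑ l, (q l) ^ 2) / 2))
      ((hdotm p).mul (hdotm q)).aestronglyMeasurable (ae_of_all _ fun ω => ?_)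
    have hp : (p ⬝ᵥ z ω) ^ 2 ≤ (∑ l, (p l) ^ 2) * ∑ l, (z ω l) ^ 2 := by
      simpa [dotProduct] using Finset.sum_mul_sq_le_sq_mul_sq Finset.univ p (z ω)
    have hq : (q ⬝ᵥ z ω) ^ 2 ≤ (∑ l, (q l) ^ 2) * ∑ l, (z ω l) ^ 2 := by
      simpa [dotProduct] using Finset.sum_mul_sq_le_sq_mul_sq Finset.univ q (z ω)
    have hz0 : (0:ℝ) ≤ ∑ l, (z ω l) ^ 2 := Finset.sum_nonneg fun l _ => sq_nonneg _
    rw [Real.norm_eq_abs]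
    rw [abs_le]
    constructor <;> nlinarith [sq_nonneg ((p ⬝ᵥ z ω) + (q ⬝ᵥ z ω)),
      sq_nonneg ((p ⬝ᵥ z ω) - (q ⬝ᵥ z ω))]
  have hIvv2 : ∀ (c : ℝ) (p : Fin n → ℝ), Integrable (fun ω => c * (p ⬝ᵥ z ω) ^ 2) μ :=
    fun c p => ((hIvv p p).const_mul c).congr (ae_of_all _ fun ω => by ring)
  have hI1 : Integrable (fun ω => ∑ i, (s i) ^ 2 * (v i ⬝ᵥ z ω) ^ 2) μ :=
    integrable_finset_sum _ fun i _ => hIvv2 _ _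
  have hI2 : Integrable (fun ω => ∑ j, (t j) ^ 2 * (v' j ⬝ᵥ z ω) ^ 2) μ :=
    integrable_finset_sum _ fun j _ => hIvv2 _ _
  have hI3 : Integrable (fun ω => ∑ i, ∑ j,
      s i * t j * (u i ⬝ᵥ u' j) * ((v i ⬝ᵥ z ω) * (v' j ⬝ᵥ z ω))) μ := by
    refine integrable_finset_sum _ fun i _ => integrable_finset_sum _ fun j _ => ?_
    exact (hIvv (v i) (v' j)).const_mul _
  have hI12 : Integrable (fun ω => (∑ i, (s i) ^ 2 * (v i ⬝ᵥ z ω) ^ 2)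
      + ∑ j, (t j) ^ 2 * (v' j ⬝ᵥ z ω) ^ 2) μ := hI1.add hI2
  have hI3' : Integrable (fun ω => 2 * ∑ i, ∑ j,
      s i * t j * (u i ⬝ᵥ u' j) * ((v i ⬝ᵥ z ω) * (v' j ⬝ᵥ z ω))) μ := hI3.const_mul 2
  have hIF : Integrable F μ := by rw [hF]; exact hI12.sub hI3'
  have hFm : Measurable F := by
    rw [hF]
    refine Measurable.sub (Measurable.add ?_ ?_) (Measurable.const_mul ?_ 2)
    · exact Finset.measurable_sum _ fun i _ =>
        measurable_const.mul ((hdotm (v i)).pow_const 2)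
    · exact Finset.measurable_sum _ fun j _ =>
        measurable_const.mul ((hdotm (v' j)).pow_const 2)
    · exact Finset.measurable_sum _ fun i _ => Finset.measurable_sum _ fun j _ =>
        measurable_const.mul ((hdotm (v i)).mul (hdotm (v' j)))
  -- value of ∫ F
  have hEF : ∫ ω, F ω ∂μ
      = (∑ i, (s i) ^ 2 * ∫ ω, (v i ⬝ᵥ z ω) ^ 2 ∂μ)
        + (∑ j, (t j) ^ 2 * ∫ ω, (v' j ⬝ᵥ z ω) ^ 2 ∂μ)
        - 2 * ∑ i, ∑ j, s i * t j * (u i ⬝ᵥ u' j)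
            * ∫ ω, (v i ⬝ᵥ z ω) * (v' j ⬝ᵥ z ω) ∂μ := by
    simp only [hF]
    rw [integral_sub hI12 hI3', integral_add hI1 hI2, integral_const_mul]
    rw [integral_finset_sum _ (fun i _ => hIvv2 ((s i) ^ 2) (v i))]
    rw [integral_finset_sum _ (fun j _ => hIvv2 ((t j) ^ 2) (v' j))]
    rw [integral_finset_sum _ (fun i _ => integrable_finset_sum _ fun j _ =>
      (hIvv (v i) (v' j)).const_mul _)]
    congr 1
    · congr 1
      · exact Finset.sum_congr rfl fun i _ => integral_const_mul _ _
      · exact Finset.sum_congr rfl fun j _ => integral_const_mul _ _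
    · congr 1
      refine Finset.sum_congr rfl fun i _ => ?_
      rw [integral_finset_sum _ (fun j _ => (hIvv (v i) (v' j)).const_mul _)]
      exact Finset.sum_congr rfl fun j _ => integral_const_mul _ _
  -- integrability of sqrt F
  have hIsF : Integrable (fun ω => Real.sqrt (F ω)) μ := by
    have hbd : Integrable (fun ω => (1 + F ω) / 2) μ :=
      ((integrable_const (1:ℝ)).add hIF).div_const 2
    refine Integrable.mono' hbd
      (Real.continuous_sqrt.comp_aestronglyMeasurable hFm.aestronglyMeasurable)
      (ae_of_all _ fun ω => ?_)
    rw [Real.norm_eq_abs, abs_of_nonneg (Real.sqrt_nonneg _)]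
    have h3 : F ω ≤ ((1 + F ω) / 2) ^ 2 := by nlinarith [sq_nonneg (1 - F ω)]
    calc Real.sqrt (F ω) ≤ Real.sqrt (((1 + F ω) / 2) ^ 2) := Real.sqrt_le_sqrt h3
      _ = (1 + F ω) / 2 := Real.sqrt_sq (by linarith [hF0 ω])
  calc ∫ ω, Real.sqrt (∑ k, (σ ((Wa *ᵥ z ω) k) - σ ((Wb *ᵥ z ω) k)) ^ 2) ∂μ
      ≤ ∫ ω, C * Real.sqrt (F ω) ∂μ := by
        refine integral_mono_of_nonneg (ae_of_all _ fun ω => Real.sqrt_nonneg _)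
          (hIsF.const_mul C) (ae_of_all _ fun ω => ?_)
        have h1 : ∑ k, (σ ((Wa *ᵥ z ω) k) - σ ((Wb *ᵥ z ω) k)) ^ 2
            ≤ C ^ 2 * ∑ k, ((Wa *ᵥ z ω) k - (Wb *ᵥ z ω) k) ^ 2 := by
          rw [Finset.mul_sum]
          refine Finset.sum_le_sum fun k _ => ?_
          have h2 := hσ ((Wa *ᵥ z ω) k) ((Wb *ᵥ z ω) k)
          calc (σ ((Wa *ᵥ z ω) k) - σ ((Wb *ᵥ z ω) k)) ^ 2
              = |σ ((Wa *ᵥ z ω) k) - σ ((Wb *ᵥ z ω) k)| ^ 2 := (sq_abs _).symm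
            _ ≤ (C * |(Wa *ᵥ z ω) k - (Wb *ᵥ z ω) k|) ^ 2 :=
                pow_le_pow_left₀ (abs_nonneg _) h2 2
            _ = C ^ 2 * ((Wa *ᵥ z ω) k - (Wb *ᵥ z ω) k) ^ 2 := by
                rw [mul_pow, sq_abs]
        calc Real.sqrt (∑ k, (σ ((Wa *ᵥ z ω) k) - σ ((Wb *ᵥ z ω) k)) ^ 2)
            ≤ Real.sqrt (C ^ 2 * ∑ k, ((Wa *ᵥ z ω) k - (Wb *ᵥ z ω) k) ^ 2) :=
              Real.sqrt_le_sqrt h1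
          _ = C * Real.sqrt (∑ k, ((Wa *ᵥ z ω) k - (Wb *ᵥ z ω) k) ^ 2) := by
              rw [Real.sqrt_mul (sq_nonneg C), Real.sqrt_sq hC.le]
          _ = C * Real.sqrt (F ω) := by rw [hG ω]
    _ = C * ∫ ω, Real.sqrt (F ω) ∂μ := integral_const_mul _ _
    _ ≤ C * Real.sqrt (∫ ω, F ω ∂μ) :=
        mul_le_mul_of_nonneg_left
          (integral_sqrt_le' μ F hF0 hFm.aestronglyMeasurable hIF) hC.le
    _ = _ := by rw [hEF]
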